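/- Let Y be a finite nonempty set, let p be a probability mass function on Y, and let X₁, …, Xₙ be independent random variables each distributed according to p. Define the empirical distribution p̂ₙ(y) := (1/n)·|{i ∈ {1,…,n} : Xᵢ = y}|. Then for every ε > 0, ℙ( Σ_{y∈Y} |p(y) − p̂ₙ(y)| ≥ ε ) ≤ exp( |Y|·log 2 − n·ε²/2 ) = 2^{|Y|} · exp(−n·ε²/2). -/

import Mathlib

open MeasureTheory ProbabilityTheory Finset
open scoped Classical

open Real

lemma two_point_mgf (q : ℝ) (h0 : 0 ≤ q) (h1 : q ≤ 1) (t : ℝ) :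
    q * exp (t * ((2*q - 1) - 1)) + (1 - q) * exp (t * ((2*q - 1) + 1)) ≤ exp (t^2/2) := by
  set E : ℝ → ℝ := fun t => exp ((-2) * t) with hE
  set D : ℝ → ℝ := fun t => (1 - q) + q * E t with hDdef
  have hD : ∀ s : ℝ, 0 < D s := by
    intro s
    have hEs : 0 < E s := exp_pos _
    have h1q : 0 ≤ 1 - q := by linarith
    -- D = (1-q)(1-E) + E
    have : D s = (1 - q) * (1 - E s) + E s := by simp [hDdef]; ring
    rcases le_total (E s) 1 with h | h
    · nlinarith
    · nlinarith
  have hED : ∀ s : ℝ, HasDerivAt E ((-2) * E s) s := by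
    intro s
    simpa [hE, mul_comm] using ((hasDerivAt_id s).const_mul (-2 : ℝ)).exp
  have hDD : ∀ s : ℝ, HasDerivAt D (q * ((-2) * E s)) s := by
    intro s
    exact ((hED s).const_mul q).const_add (1 - q)
  -- h and its derivative h1
  set h : ℝ → ℝ := fun t => t^2/2 - 2*t*q - log (D t) with hh
  set h1 : ℝ → ℝ := fun t => t - 2*q + 2*q*E t / D t with hh1
  have hDh : ∀ s : ℝ, HasDerivAt h (h1 s) s := by
    intro s
    have hlog : HasDerivAt (fun u => log (D u)) ((q * ((-2) * E s)) / D s) s :=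
      (hDD s).log (hD s).ne'
    have h2 : HasDerivAt (fun u : ℝ => u^2/2 - 2*u*q) (s - 2*q) s := by
      have := ((hasDerivAt_pow 2 s).div_const 2).sub (((hasDerivAt_id s).const_mul 2).mul_const q)
      exact (this.congr_of_eventuallyEq (Filter.Eventually.of_forall fun u => rfl)).congr_deriv
        (by norm_num)
    have base := h2.sub hlog
    have heq : h1 s = s - 2*q - q * ((-2) * E s) / D s := by
      simp only [hh1]; ring
    rw [heq]; exact base
  have hDh1 : ∀ s : ℝ, HasDerivAt h1
      (1 + ((2*q*((-2) * E s)) * D s - (2*q*E s) * (q * ((-2) * E s))) / (D s)^2) s := by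
    intro s
    have hq : HasDerivAt (fun u => 2*q*E u / D u)
        (((2*q*((-2) * E s)) * D s - (2*q*E s) * (q * ((-2) * E s))) / (D s)^2) s :=
      ((hED s).const_mul (2*q)).div (hDD s) (hD s).ne'
    have := ((hasDerivAt_id s).sub_const (2*q)).add hq
    exact this
  have hderiv_nonneg : ∀ s : ℝ,
      0 ≤ 1 + ((2*q*((-2) * E s)) * D s - (2*q*E s) * (q * ((-2) * E s))) / (D s)^2 := by
    intro s
    have hDs := hD s
    have key : 1 + ((2*q*((-2) * E s)) * D s - (2*q*E s) * (q * ((-2) * E s))) / (D s)^2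
        = (D s - 2*q*E s)^2 / (D s)^2 := by
      field_simp
      ring
    rw [key]; positivity
  have hmono1 : Monotone h1 := by
    apply monotone_of_deriv_nonneg
    · exact fun s => (hDh1 s).differentiableAt
    · intro s; rw [(hDh1 s).deriv]; exact hderiv_nonneg s
  have h10 : h1 0 = 0 := by
    simp [hh1, hE, hDdef]
  have hdiffh : Differentiable ℝ h := fun s => (hDh s).differentiableAt
  have hnonneg : 0 ≤ h t := by
    have h0' : h 0 = 0 := by simp [hh, hDdef, hE]
    rcases le_total 0 t with ht | ht
    · have : MonotoneOn h (Set.Ici 0) := by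
        apply monotoneOn_of_deriv_nonneg (convex_Ici 0) hdiffh.continuous.continuousOn
          hdiffh.differentiableOn
        intro x hx
        rw [(hDh x).deriv]
        rw [← h10]
        exact hmono1 (le_of_lt (by simpa using hx))
      have := this (Set.self_mem_Ici) (Set.mem_Ici.2 ht) ht
      linarith [h0']
    · have : AntitoneOn h (Set.Iic 0) := by
        apply antitoneOn_of_deriv_nonpos (convex_Iic 0) hdiffh.continuous.continuousOn
          hdiffh.differentiableOn
        intro x hx
        rw [(hDh x).deriv]
        rw [← h10]
        exact hmono1 (le_of_lt (by simpa using hx))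
      have := this (Set.mem_Iic.2 ht) (Set.self_mem_Iic) ht
      linarith [h0']
  -- translate
  have hlhs : q * exp (t * ((2*q - 1) - 1)) + (1 - q) * exp (t * ((2*q - 1) + 1))
      = exp (2*t*q) * D t := by
    simp only [hDdef, hE]
    rw [show t * ((2*q - 1) - 1) = 2*t*q + (-2)*t by ring,
      show t * ((2*q - 1) + 1) = 2*t*q by ring, exp_add]
    ring
  rw [hlhs]
  have : exp (2*t*q) * D t = exp (2*t*q + log (D t)) := by
    rw [exp_add, exp_log (hD t)]
  rw [this]
  apply exp_le_exp.2
  simp only [hh] at hnonneg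
  linarith


lemma chernoff_sign
    {Ω : Type*} [MeasurableSpace Ω] (P : Measure Ω) [IsProbabilityMeasure P]
    {Y : Type*} [Fintype Y] [MeasurableSpace Y] [MeasurableSingletonClass Y]
    (p : Y → ℝ) (hp0 : ∀ y, 0 ≤ p y) (hp1 : ∑ y, p y = 1)
    (n : ℕ) (X : Fin n → Ω → Y)
    (hmeas : ∀ i, Measurable (X i))
    (hindep : iIndepFun X P)
    (hlaw : ∀ i y, P {ω | X i ω = y} = ENNReal.ofReal (p y))
    (ε : ℝ) (hε : 0 < ε) (σ : Y → Bool) :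
    P {ω | (n:ℝ) * ε ≤ ∑ i, ((∑ y, ((if σ y then (1:ℝ) else -1) * p y))
        - (if σ (X i ω) then (1:ℝ) else -1))}
      ≤ ENNReal.ofReal (Real.exp (-((n:ℝ) * ε^2/2))) := by
  set s : Y → ℝ := fun y => if σ y then (1:ℝ) else -1 with hs
  set c : ℝ := ∑ y, s y * p y with hc
  set g : Y → ℝ := fun y => c - s y with hg
  set Z : Fin n → Ω → ℝ := fun i ω => g (X i ω) with hZ
  have hgmeas : Measurable g := measurable_of_countable g
  have hZmeas : ∀ i, Measurable (Z i) := fun i => hgmeas.comp (hmeas i)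
  have hZindep : iIndepFun Z P :=
    hindep.comp (fun _ => g) (fun _ => hgmeas)
  -- integrability
  have hmapprob : ∀ i, IsProbabilityMeasure (P.map (X i)) :=
    fun i => Measure.isProbabilityMeasure_map (hmeas i).aemeasurable
  have hZint : ∀ i, Integrable (fun ω => exp (ε * Z i ω)) P := by
    intro i
    have := hmapprob i
    have hi : Integrable (fun y => exp (ε * g y)) (P.map (X i)) := .of_finite
    exact (integrable_map_measure hi.1 (hmeas i).aemeasurable).mp hi
  -- q
  set q : ℝ := ∑ y ∈ univ.filter (fun y => σ y = true), p y with hq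
  have hq0 : 0 ≤ q := Finset.sum_nonneg fun y _ => hp0 y
  have hq1 : q ≤ 1 := by
    rw [hq, ← hp1]
    exact Finset.sum_le_sum_of_subset_of_nonneg (Finset.filter_subset _ _)
      (fun y _ _ => hp0 y)
  have hqc : ∑ y ∈ univ.filter (fun y => ¬ (σ y = true)), p y = 1 - q := by
    have := Finset.sum_filter_add_sum_filter_not univ (fun y => σ y = true) p
    rw [← hq] at this
    linarith
  have hcq : c = 2*q - 1 := by
    rw [hc, ← Finset.sum_filter_add_sum_filter_not univ (fun y => σ y = true)
      (fun y => s y * p y)]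
    have e1 : ∑ y ∈ univ.filter (fun y => σ y = true), s y * p y = q := by
      rw [hq]
      refine Finset.sum_congr rfl fun y hy => ?_
      simp only [Finset.mem_filter] at hy
      simp [hs, hy.2]
    have e2 : ∑ y ∈ univ.filter (fun y => ¬ (σ y = true)), s y * p y = -(1 - q) := by
      rw [← hqc, ← Finset.sum_neg_distrib]
      refine Finset.sum_congr rfl fun y hy => ?_
      simp only [Finset.mem_filter] at hy
      simp [hs, hy.2]
    rw [e1, e2]; ring
  -- mgf of each Z i
  have hmgf : ∀ i, mgf (Z i) P ε ≤ exp (ε^2/2) := by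
    intro i
    have := hmapprob i
    have hi : Integrable (fun y => exp (ε * g y)) (P.map (X i)) := .of_finite
    have h1 : mgf (Z i) P ε = ∑ y, ((P.map (X i)) {y}).toReal * exp (ε * g y) := by
      rw [mgf]
      have : ∫ ω, exp (ε * Z i ω) ∂P = ∫ y, exp (ε * g y) ∂(P.map (X i)) := by
        rw [integral_map (hmeas i).aemeasurable]
        exact ((measurable_of_countable _).const_mul ε).exp.aestronglyMeasurable
      rw [this, integral_fintype hi]
      simp [smul_eq_mul, Measure.real]
    have h2 : ∀ y, ((P.map (X i)) {y}).toReal = p y := by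
      intro y
      rw [Measure.map_apply (hmeas i) (measurableSet_singleton y)]
      have : (X i) ⁻¹' {y} = {ω | X i ω = y} := by ext ω; simp
      rw [this, hlaw i y, ENNReal.toReal_ofReal (hp0 y)]
    calc mgf (Z i) P ε = ∑ y, p y * exp (ε * g y) := by
          rw [h1]; exact Finset.sum_congr rfl fun y _ => by rw [h2]
      _ = q * exp (ε * ((2*q - 1) - 1)) + (1 - q) * exp (ε * ((2*q - 1) + 1)) := by
          rw [← Finset.sum_filter_add_sum_filter_not univ (fun y => σ y = true)
            (fun y => p y * exp (ε * g y))]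
          have e1 : ∑ y ∈ univ.filter (fun y => σ y = true), p y * exp (ε * g y)
              = q * exp (ε * ((2*q - 1) - 1)) := by
            rw [hq, Finset.sum_mul]
            refine Finset.sum_congr rfl fun y hy => ?_
            simp only [Finset.mem_filter] at hy
            simp [hg, hs, hy.2, hcq, hq]
          have e2 : ∑ y ∈ univ.filter (fun y => ¬ (σ y = true)), p y * exp (ε * g y)
              = (1 - q) * exp (ε * ((2*q - 1) + 1)) := by
            rw [← hqc, Finset.sum_mul]
            refine Finset.sum_congr rfl fun y hy => ?_
            simp only [Finset.mem_filter] at hy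
            simp only [hg, hs, hy.2, hcq, if_false]
            norm_num
          rw [e1, e2]
      _ ≤ exp (ε^2/2) := two_point_mgf q hq0 hq1 ε
  -- Chernoff
  have hintsum : Integrable (fun ω => exp (ε * (∑ i, Z i) ω)) P :=
    hZindep.integrable_exp_mul_sum hZmeas (fun i _ => hZint i)
  have hch := measure_ge_le_exp_mul_mgf (X := ∑ i, Z i) (μ := P) ((n:ℝ) * ε) hε.le hintsum
  have hmgfsum : mgf (∑ i, Z i) P ε ≤ exp (ε^2/2) ^ n := by
    rw [hZindep.mgf_sum hZmeas]
    calc ∏ i : Fin n, mgf (Z i) P ε ≤ ∏ _i : Fin n, exp (ε^2/2) :=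
          Finset.prod_le_prod (fun i _ => mgf_nonneg) (fun i _ => hmgf i)
      _ = exp (ε^2/2) ^ n := by simp
  have hsetEq : {ω | (n:ℝ) * ε ≤ ∑ i, (c - s (X i ω))} = {ω | (n:ℝ)*ε ≤ (∑ i, Z i) ω} := by
    ext ω; simp [hZ, hg]
  have hfinal : ((P {ω | (n:ℝ)*ε ≤ (∑ i, Z i) ω}).toReal) ≤ exp (-((n:ℝ) * ε^2/2)) := by
    refine hch.trans ?_
    calc exp (-ε * ((n:ℝ)*ε)) * mgf (∑ i, Z i) P ε
        ≤ exp (-ε * ((n:ℝ)*ε)) * exp (ε^2/2) ^ n := by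
          exact mul_le_mul_of_nonneg_left hmgfsum (exp_nonneg _)
      _ = exp (-((n:ℝ) * ε^2/2)) := by
          rw [← Real.exp_nat_mul, ← Real.exp_add]
          ring_nf
  have : P {ω | (n:ℝ)*ε ≤ (∑ i, Z i) ω} ≤ ENNReal.ofReal (exp (-((n:ℝ) * ε^2/2))) := by
    rw [← ENNReal.ofReal_toReal (measure_ne_top P _)]
    exact ENNReal.ofReal_le_ofReal hfinal
  calc P {ω | (n:ℝ) * ε ≤ ∑ i, ((∑ y, ((if σ y then (1:ℝ) else -1) * p y))
        - (if σ (X i ω) then (1:ℝ) else -1))}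
      = P {ω | (n:ℝ)*ε ≤ (∑ i, Z i) ω} := by rw [← hsetEq]
    _ ≤ _ := this

/-- Lemma 2 (Weissman-style L1 concentration): for i.i.d. samples X₁,…,Xₙ from a pmf p on a
finite set Y, the L1 deviation of the empirical distribution from p satisfies
ℙ(‖p − p̂ₙ‖₁ ≥ ε) ≤ exp(|Y|·log 2 − n·ε²/2) = 2^{|Y|}·exp(−n·ε²/2). -/
theorem weissman_l1_concentration
    {Ω : Type*} [MeasurableSpace Ω] (P : Measure Ω) [IsProbabilityMeasure P]
    {Y : Type*} [Fintype Y] [Nonempty Y] [MeasurableSpace Y] [MeasurableSingletonClass Y]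
    (p : Y → ℝ) (hp0 : ∀ y, 0 ≤ p y) (hp1 : ∑ y, p y = 1)
    (n : ℕ) (hn : 0 < n) (X : Fin n → Ω → Y)
    (hmeas : ∀ i, Measurable (X i))
    (hindep : iIndepFun X P)
    (hlaw : ∀ i y, P {ω | X i ω = y} = ENNReal.ofReal (p y))
    (ε : ℝ) (hε : 0 < ε) :
    P {ω | ε ≤ ∑ y, |p y - (1 / n : ℝ) * ((univ.filter (fun i => X i ω = y)).card : ℝ)|}
      ≤ ENNReal.ofReal (Real.exp ((Fintype.card Y : ℝ) * Real.log 2 - n * ε ^ 2 / 2)) := by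
  have hn' : (n:ℝ) ≠ 0 := Nat.cast_ne_zero.mpr hn.ne'
  have hnpos : (0:ℝ) < n := Nat.cast_pos.mpr hn
  -- key per-(σ, ω) identity
  have key : ∀ (σ : Y → Bool) (ω : Ω),
      ∑ i, ((∑ y, ((if σ y then (1:ℝ) else -1) * p y)) - (if σ (X i ω) then (1:ℝ) else -1))
      = (n:ℝ) * ∑ y, (if σ y then (1:ℝ) else -1) *
          (p y - (1 / n : ℝ) * ((univ.filter (fun i => X i ω = y)).card : ℝ)) := by
    intro σ ω
    set s : Y → ℝ := fun y => if σ y then (1:ℝ) else -1 with hs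
    have h1 : ∑ y, s y * ((univ.filter (fun i => X i ω = y)).card : ℝ)
        = ∑ i, s (X i ω) := by
      rw [← Finset.sum_fiberwise' univ (fun i => X i ω) s]
      refine Finset.sum_congr rfl fun y _ => ?_
      rw [Finset.sum_const, nsmul_eq_mul, mul_comm]
    have h2 : ∑ i : Fin n, ((∑ y, s y * p y) - s (X i ω))
        = (n:ℝ) * (∑ y, s y * p y) - ∑ i, s (X i ω) := by
      rw [Finset.sum_sub_distrib, Finset.sum_const, Finset.card_univ, Fintype.card_fin,
        nsmul_eq_mul]
    rw [h2, ← h1]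
    rw [Finset.mul_sum]
    rw [← Finset.sum_sub_distrib]
    rw [Finset.mul_sum]
    refine Finset.sum_congr rfl fun y _ => ?_
    by_cases hy : σ y = true
    · rw [show s y = 1 by simp [hs, hy]]; field_simp; rw [if_pos hy]; ring
    · rw [show s y = -1 by simp [hs, hy]]; field_simp; rw [if_neg hy]; ring
  -- inclusion into a union
  have hsub : {ω | ε ≤ ∑ y, |p y - (1 / n : ℝ) * ((univ.filter (fun i => X i ω = y)).card : ℝ)|}
      ⊆ ⋃ σ : Y → Bool, {ω | (n:ℝ) * ε ≤
          ∑ i, ((∑ y, ((if σ y then (1:ℝ) else -1) * p y))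
            - (if σ (X i ω) then (1:ℝ) else -1))} := by
    intro ω hω
    simp only [Set.mem_setOf_eq] at hω
    set σ : Y → Bool := fun y =>
      decide (0 ≤ p y - (1 / n : ℝ) * ((univ.filter (fun i => X i ω = y)).card : ℝ)) with hσ
    refine Set.mem_iUnion.2 ⟨σ, ?_⟩
    simp only [Set.mem_setOf_eq]
    rw [key σ ω]
    have habs : ∀ y, (if σ y then (1:ℝ) else -1) *
        (p y - (1 / n : ℝ) * ((univ.filter (fun i => X i ω = y)).card : ℝ))
        = |p y - (1 / n : ℝ) * ((univ.filter (fun i => X i ω = y)).card : ℝ)| := by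
      intro y
      rcases le_or_gt 0 (p y - (1 / n : ℝ) * ((univ.filter (fun i => X i ω = y)).card : ℝ))
        with h | h
      · have hy : σ y = true := decide_eq_true h
        rw [hy, if_pos rfl, one_mul, abs_of_nonneg h]
      · have hy : σ y = false := decide_eq_false (not_le.2 h)
        rw [hy, if_neg (by simp), abs_of_neg h]; ring
    rw [Finset.sum_congr rfl (fun y _ => habs y)]
    exact mul_le_mul_of_nonneg_left hω hnpos.le
  -- union bound
  calc P {ω | ε ≤ ∑ y, |p y - (1 / n : ℝ) * ((univ.filter (fun i => X i ω = y)).card : ℝ)|}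
      ≤ P (⋃ σ : Y → Bool, {ω | (n:ℝ) * ε ≤
          ∑ i, ((∑ y, ((if σ y then (1:ℝ) else -1) * p y))
            - (if σ (X i ω) then (1:ℝ) else -1))}) := measure_mono hsub
    _ ≤ ∑ σ : Y → Bool, P {ω | (n:ℝ) * ε ≤
          ∑ i, ((∑ y, ((if σ y then (1:ℝ) else -1) * p y))
            - (if σ (X i ω) then (1:ℝ) else -1))} := measure_iUnion_fintype_le _ _
    _ ≤ ∑ _σ : Y → Bool, ENNReal.ofReal (Real.exp (-((n:ℝ) * ε^2/2))) :=
        Finset.sum_le_sum fun σ _ =>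
          chernoff_sign P p hp0 hp1 n X hmeas hindep hlaw ε hε σ
    _ = ((Fintype.card (Y → Bool) : ℕ) : ENNReal) * ENNReal.ofReal (Real.exp (-((n:ℝ) * ε^2/2))) := by
        rw [Finset.sum_const, Finset.card_univ, nsmul_eq_mul]
    _ = ENNReal.ofReal (Real.exp ((Fintype.card Y : ℝ) * Real.log 2 - n * ε ^ 2 / 2)) := by
        rw [Fintype.card_fun, Fintype.card_bool]
        rw [show (Fintype.card Y : ℝ) * Real.log 2 - n * ε ^ 2 / 2
            = (Fintype.card Y : ℝ) * Real.log 2 + (-((n:ℝ) * ε^2/2)) by ring]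
        rw [Real.exp_add, ENNReal.ofReal_mul (by positivity)]
        congr 1
        rw [Real.exp_nat_mul, Real.exp_log (by norm_num : (0:ℝ) < 2),
          show ((2:ℝ))^(Fintype.card Y) = (((2^(Fintype.card Y) : ℕ)):ℝ) by push_cast; ring,
          ENNReal.ofReal_natCast]
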